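/- Let T be a nonzero continuous rank-r covariant tensor on a Lorentzian vector space with the dominant property (T ≥ 0 on r-tuples of future-pointing causal vectors). Then T(u₁,…,u_r) > 0 strictly for all future-pointing timelike vectors u₁,…,u_r. -/
import Mathlib

open scoped BigOperators

noncomputable section

/-- Minkowski metric on `Fin n → ℝ`, mostly-plus signature (1, n-1). -/
def mink (n : ℕ) [NeZero n] (u v : Fin n → ℝ) : ℝ :=
  ∑ i : Fin n, (if i = 0 then (-1 : ℝ) else 1) * u i * v i

/-- Future-pointing causal vector: nonpositive norm, in the closed future half-cone. -/
def FutureCausal (n : ℕ) [NeZero n] (u : Fin n → ℝ) : Prop :=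
  mink n u u ≤ 0 ∧ 0 ≤ u 0

/-- The dominant property for rank-`r` covariant tensors. -/
def DP (n r : ℕ) [NeZero n] (T : MultilinearMap ℝ (fun _ : Fin r => (Fin n → ℝ)) ℝ) : Prop :=
  ∀ u : Fin r → (Fin n → ℝ), (∀ i, FutureCausal n (u i)) → 0 ≤ T u

/-- Future-pointing timelike vector. -/
def FutureTimelike (n : ℕ) [NeZero n] (u : Fin n → ℝ) : Prop :=
  mink n u u < 0 ∧ 0 < u 0

lemma tl_causal {n : ℕ} [NeZero n] {u : Fin n → ℝ} (h : FutureTimelike n u) :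
    FutureCausal n u := ⟨h.1.le, h.2.le⟩

/-- Openness of the timelike cone along lines. -/
lemma tl_open {n : ℕ} [NeZero n] {u : Fin n → ℝ} (hu : FutureTimelike n u)
    (w : Fin n → ℝ) :
    ∃ ε : ℝ, 0 < ε ∧ FutureTimelike n (u + ε • w) ∧ FutureTimelike n (u - ε • w) := by
  have hcont : ∀ s : Fin n → ℝ, Continuous fun t : ℝ => mink n (u + t • s) (u + t • s) := by
    intro s
    unfold mink
    apply continuous_finset_sum
    intro i _
    simp only [Pi.add_apply, Pi.smul_apply, smul_eq_mul]
    fun_prop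
  have key : ∀ s : Fin n → ℝ, ∀ᶠ t : ℝ in nhds 0, FutureTimelike n (u + t • s) := by
    intro s
    have h1 : ∀ᶠ t : ℝ in nhds 0, mink n (u + t • s) (u + t • s) < 0 := by
      have := (hcont s).tendsto 0
      simp only [zero_smul, add_zero] at this
      exact this.eventually_lt_const hu.1
    have h2 : ∀ᶠ t : ℝ in nhds 0, 0 < (u + t • s) 0 := by
      have hc : Continuous fun t : ℝ => (u + t • s) 0 := by
        simp only [Pi.add_apply, Pi.smul_apply, smul_eq_mul]; fun_prop
      have := hc.tendsto 0
      simp only [zero_smul, add_zero] at this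
      exact this.eventually_const_lt hu.2
    filter_upwards [h1, h2] with t ht1 ht2
    exact ⟨ht1, ht2⟩
  have hw := (key w).and (key (-w))
  rw [Metric.eventually_nhds_iff] at hw
  obtain ⟨ε, hε, h⟩ := hw
  have habs : dist (ε/2) (0:ℝ) < ε := by
    rw [Real.dist_eq, sub_zero, abs_of_pos (by linarith : (0:ℝ) < ε/2)]; linarith
  obtain ⟨hp, hm⟩ := h habs
  refine ⟨ε/2, by linarith, hp, ?_⟩
  have : u - (ε/2) • w = u + (ε/2) • (-w) := by
    ext i; simp; ring
  rw [this]; exact hm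

/-- A linear functional nonnegative on timelike vectors and vanishing at a timelike
vector vanishes everywhere. -/
lemma lin_zero {n : ℕ} [NeZero n] (f : (Fin n → ℝ) →ₗ[ℝ] ℝ)
    (hf : ∀ x, FutureTimelike n x → 0 ≤ f x)
    {u : Fin n → ℝ} (hu : FutureTimelike n u) (hfu : f u = 0) :
    ∀ w, f w = 0 := by
  intro w
  obtain ⟨ε, hε, hp, hm⟩ := tl_open hu w
  have h1 := hf _ hp
  have h2 := hf _ hm
  rw [map_add, map_smul, hfu, smul_eq_mul] at h1
  rw [map_sub, map_smul, hfu, smul_eq_mul] at h2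
  nlinarith

/-- The base timelike vector `e₀`. -/
lemma tl_e0 {n : ℕ} [NeZero n] :
    FutureTimelike n (fun j => if j = 0 then (1:ℝ) else 0) := by
  constructor
  · unfold mink
    have : ∀ i : Fin n,
        (if i = 0 then (-1:ℝ) else 1) * (if i = 0 then (1:ℝ) else 0) *
          (if i = 0 then (1:ℝ) else 0) = if i = 0 then (-1:ℝ) else 0 := by
      intro i; by_cases h : i = 0 <;> simp [h]
    rw [Finset.sum_congr rfl fun i _ => this i]
    simp
  · simp

/-- Timelike vectors span everything. -/
lemma tl_span {n : ℕ} [NeZero n] :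
    Submodule.span ℝ {x : Fin n → ℝ | FutureTimelike n x} = ⊤ := by
  rw [eq_top_iff]
  intro x _
  obtain ⟨ε, hε, hp, _⟩ := tl_open (tl_e0 (n := n)) x
  set e0 : Fin n → ℝ := fun j => if j = 0 then (1:ℝ) else 0 with he0
  have hmem1 : e0 + ε • x ∈ Submodule.span ℝ {x : Fin n → ℝ | FutureTimelike n x} :=
    Submodule.subset_span hp
  have hmem2 : e0 ∈ Submodule.span ℝ {x : Fin n → ℝ | FutureTimelike n x} :=
    Submodule.subset_span (tl_e0 (n := n))
  have : x = ε⁻¹ • (e0 + ε • x) - ε⁻¹ • e0 := by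
    rw [smul_add, smul_smul, inv_mul_cancel₀ hε.ne', one_smul]
    abel
  rw [this]
  exact Submodule.sub_mem _ (Submodule.smul_mem _ _ hmem1) (Submodule.smul_mem _ _ hmem2)

/-- A nonzero tensor with the dominant property is strictly positive on all
tuples of future-pointing timelike vectors. -/
theorem stmt_3 (n r : ℕ) [NeZero n]
    (T : MultilinearMap ℝ (fun _ : Fin r => (Fin n → ℝ)) ℝ)
    (hT : T ≠ 0) (hDP : DP n r T) :
    ∀ u : Fin r → (Fin n → ℝ), (∀ i, FutureTimelike n (u i)) → 0 < T u := by
  intro u hu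
  rcases lt_or_eq_of_le (hDP u fun i => tl_causal (hu i)) with h | h
  · exact h
  exfalso
  apply hT
  -- Step 1: T vanishes on all timelike tuples
  have Q : ∀ k : ℕ, ∀ v : Fin r → (Fin n → ℝ),
      (∀ i : Fin r, (i : ℕ) < k → FutureTimelike n (v i)) →
      (∀ i : Fin r, k ≤ (i : ℕ) → v i = u i) → T v = 0 := by
    intro k
    induction k with
    | zero =>
      intro v _ h2
      have : v = u := funext fun i => h2 i (Nat.zero_le _)
      rw [this, ← h]
    | succ k ih =>
      intro v hlt hge
      by_cases hk : k < r
      · set j : Fin r := ⟨k, hk⟩ with hj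
        have hjk : (j : ℕ) = k := rfl
        set f := T.toLinearMap v j with hf
        have hfx : ∀ x, FutureTimelike n x → 0 ≤ f x := by
          intro x hx
          apply hDP
          intro i
          by_cases hij : i = j
          · subst hij; simp only [Function.update_self]; exact tl_causal hx
          · rw [Function.update_of_ne hij]
            by_cases hik : (i : ℕ) < k + 1
            · have : (i : ℕ) < k := by
                rcases Nat.lt_succ_iff_lt_or_eq.mp hik with h' | h'
                · exact h'
                · exact absurd (Fin.ext h' : i = j) hij
              exact tl_causal (hlt i hik)
            · rw [hge i (by omega)]; exact tl_causal (hu i)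
        have hfu : f (u j) = 0 := by
          apply ih
          · intro i hik
            have hij : i ≠ j := fun e => by rw [e, hjk] at hik; omega
            rw [Function.update_of_ne hij]
            exact hlt i (by omega)
          · intro i hik
            by_cases hij : i = j
            · subst hij; simp
            · rw [Function.update_of_ne hij]
              apply hge i
              have : (i : ℕ) ≠ k := fun e => hij (Fin.ext (e.trans hjk.symm))
              omega
        have := lin_zero f hfx (hu j) hfu (v j)
        rw [hf] at this
        simpa [Function.update_eq_self] using this
      · apply ih
        · intro i _
          exact hlt i (by omega)
        · intro i hik
          exact absurd (lt_of_le_of_lt hik i.isLt) (by omega)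
  -- Step 2: extend to all tuples by spanning
  have R : ∀ k : ℕ, ∀ v : Fin r → (Fin n → ℝ),
      (∀ i : Fin r, k ≤ (i : ℕ) → FutureTimelike n (v i)) → T v = 0 := by
    intro k
    induction k with
    | zero =>
      intro v hv
      exact Q r v (fun i _ => hv i (Nat.zero_le _)) (fun i hi => absurd i.isLt (by omega))
    | succ k ih =>
      intro v hv
      by_cases hk : k < r
      · set j : Fin r := ⟨k, hk⟩ with hj
        set f := T.toLinearMap v j with hf
        have hzero : f = 0 := by
          apply LinearMap.ext_on (tl_span (n := n))
          intro x hx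
          simp only [LinearMap.zero_apply]
          apply ih
          intro i hik
          by_cases hij : i = j
          · subst hij; simpa using hx
          · rw [Function.update_of_ne hij]
            apply hv i
            have : (i : ℕ) ≠ k := fun e => hij (Fin.ext e)
            omega
        have : f (v j) = 0 := by rw [hzero]; rfl
        rw [hf] at this
        simpa [Function.update_eq_self] using this
      · exact ih v fun i hik => hv i (by omega)
  refine MultilinearMap.ext fun v => ?_
  simpa using R r v fun i hi => absurd i.isLt (by omega)
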